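/- Let 𝔰 = (s_1,…,s_r) be a tuple of positive integers and u = (u_1,…,u_r) ∈ F^r with |u_1| < q^{s_1·q/(q−1)} and |u_k| ≤ q^{s_k·q/(q−1)} for 2 ≤ k ≤ r, and write 𝔏i⋆_{𝔰,u} = Σ_{m≥0} c_m t^m ∈ F[[t]]. Then |c_m|·q^m → 0 as m → ∞, the family (c_m·θ^m)_{m≥0} is summable in F, and Σ_{m≥0} c_m·θ^m = Li⋆_𝔰(u) (whose defining family over i_1 ≥ ⋯ ≥ i_r ≥ 0 is summable in F). (This is the specialization identity 𝔏i⋆_{𝔰,u}|_{t=θ} = Li⋆_𝔰(u) of Section 3.1 of the paper.) -/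

import Mathlib

open PowerSeries Filter Topology
open scoped ENNReal

set_option linter.unusedSectionVars false
set_option linter.unusedVariables false
set_option maxHeartbeats 1000000

noncomputable section

/-- The product (coefficientwise) topology on `PowerSeries F`. -/
instance psTop {F : Type*} [Semiring F] [TopologicalSpace F] :
    TopologicalSpace (PowerSeries F) :=
  TopologicalSpace.induced (fun φ (n : ℕ) => PowerSeries.coeff n φ) inferInstance

variable {F : Type*} [Field F]

/-- `𝕃_i = (t-θ^q)⋯(t-θ^{q^i})` as a formal power series. -/
def LL (q : ℕ) (θ : F) (i : ℕ) : PowerSeries F :=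
  ∏ m ∈ Finset.range i, (PowerSeries.X - PowerSeries.C (θ ^ q ^ (m + 1)))

/-- `L_i = (θ-θ^q)⋯(θ-θ^{q^i})`. -/
def LF (q : ℕ) (θ : F) (i : ℕ) : F :=
  ∏ m ∈ Finset.range i, (θ - θ ^ q ^ (m + 1))

/-- General term `u_1^{q^{i_1}}⋯u_r^{q^{i_r}}·(𝕃_{i_1}^{s_1}⋯𝕃_{i_r}^{s_r})⁻¹` of a
t-motivic Carlitz multiple (star) polylogarithm. -/
def polyLogTerm (q : ℕ) (θ : F) {r : ℕ} (s : Fin r → ℕ) (u : Fin r → F)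
    (i : Fin r → ℕ) : PowerSeries F :=
  ∏ k, PowerSeries.C (u k ^ q ^ i k) * (LL q θ (i k) ^ s k)⁻¹

namespace St15

/-! ### Topology of `PowerSeries` with the coefficientwise topology -/

section Top
variable {F : Type*} [Semiring F] [TopologicalSpace F]

theorem hasSum_iff_coeff {ι : Type*} {f : ι → PowerSeries F} {a : PowerSeries F} :
    HasSum f a ↔ ∀ n, HasSum (fun i => coeff n (f i)) (coeff n a) := by
  rw [HasSum, nhds_induced, tendsto_comap_iff]
  have h : ((fun φ (n : ℕ) => coeff n φ) ∘ fun S : Finset ι => ∑ i ∈ S, f i)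
      = fun S (n : ℕ) => ∑ i ∈ S, coeff n (f i) := by
    funext S n; simp [map_sum]
  rw [h, tendsto_pi_nhds]
  exact forall_congr' fun n => Iff.rfl

theorem hasSum_mk [T2Space F] {ι : Type*} {f : ι → PowerSeries F}
    (h : ∀ n, Summable fun i => coeff n (f i)) :
    HasSum f (PowerSeries.mk fun n => ∑' i, coeff n (f i)) :=
  hasSum_iff_coeff.2 fun n => by simpa [coeff_mk] using (h n).hasSum

instance [T2Space F] : T2Space (PowerSeries F) :=
  Topology.IsEmbedding.t2Space ⟨⟨rfl⟩, fun φ ψ h => PowerSeries.ext fun n => congrFun h n⟩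

theorem coeff_tsum [T2Space F] {ι : Type*} {f : ι → PowerSeries F}
    (h : ∀ n, Summable fun i => coeff n (f i)) (n : ℕ) :
    coeff n (∑' i, f i) = ∑' i, coeff n (f i) := by
  rw [(hasSum_mk h).tsum_eq, coeff_mk]

end Top

/-! ### Inverses of products of linear power series -/

section InvLinear
variable {F : Type*} [Field F]

theorem constCoeff_linear (a : F) (ha : a ≠ 0) : constantCoeff (X - C a) ≠ 0 := by
  simp [ha]

theorem inv_linear (a : F) (ha : a ≠ 0) :
    (X - C a)⁻¹ = PowerSeries.mk fun n => -(a⁻¹ ^ (n + 1)) := by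
  rw [PowerSeries.inv_eq_iff_mul_eq_one (constCoeff_linear a ha)]
  ext n
  rw [mul_sub, map_sub, PowerSeries.coeff_mul_C, PowerSeries.coeff_one]
  rcases n with _ | n
  · rw [PowerSeries.coeff_zero_mul_X, coeff_mk]
    simp [inv_mul_cancel₀ ha]
  · rw [PowerSeries.coeff_succ_mul_X, coeff_mk, coeff_mk]
    have h2 : a⁻¹ ^ (n + 1 + 1) * a = a⁻¹ ^ (n + 1) := by
      rw [pow_succ, mul_assoc, inv_mul_cancel₀ ha, mul_one]
    simp only [neg_mul, h2, if_neg (Nat.succ_ne_zero n)]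
    ring

theorem prod_inv {ι : Type*} (t : Finset ι) (f : ι → PowerSeries F) :
    (∏ k ∈ t, f k)⁻¹ = ∏ k ∈ t, (f k)⁻¹ := by
  induction t using Finset.cons_induction with
  | empty => simp
  | cons a t ha ih => rw [Finset.prod_cons, Finset.prod_cons, PowerSeries.mul_inv_rev, ih, mul_comm]

theorem pow_inv (φ : PowerSeries F) (s : ℕ) : (φ ^ s)⁻¹ = φ⁻¹ ^ s := by
  induction s with
  | zero => simp
  | succ n ih => rw [pow_succ, PowerSeries.mul_inv_rev, ih, pow_succ, mul_comm]

end InvLinear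

/-! ### Ultrametric coefficient bounds for products -/

section Bounds
variable {F : Type*} [NormedField F] [IsUltrametricDist F]

theorem coeff_prod_le {ι : Type*} (t : Finset ι) (φ : ι → PowerSeries F) (B : ι → ℝ)
    (hB : ∀ k ∈ t, 0 ≤ B k) {ρ : ℝ} (hρ0 : 0 ≤ ρ) (hρ1 : ρ ≤ 1)
    (h : ∀ k ∈ t, ∀ n, ‖coeff n (φ k)‖ ≤ B k * ρ ^ n) (n : ℕ) :
    ‖coeff n (∏ k ∈ t, φ k)‖ ≤ (∏ k ∈ t, B k) * ρ ^ n := by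
  induction t using Finset.cons_induction generalizing n with
  | empty =>
    simp only [Finset.prod_empty, PowerSeries.coeff_one, one_mul]
    rcases eq_or_ne n 0 with rfl | hn
    · simp
    · simp only [hn, if_false, norm_zero]
      positivity
  | cons a t ha ih =>
    rw [Finset.prod_cons, Finset.prod_cons, PowerSeries.coeff_mul]
    have hBa : 0 ≤ B a := hB a (Finset.mem_cons_self a t)
    have hBt : 0 ≤ ∏ k ∈ t, B k := Finset.prod_nonneg fun k hk => hB k (Finset.mem_cons_of_mem hk)
    apply IsUltrametricDist.norm_sum_le_of_forall_le_of_nonneg (by positivity)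
    intro kl hkl
    have hkln := Finset.HasAntidiagonal.mem_antidiagonal.mp hkl
    have h1 : ‖coeff kl.1 (φ a)‖ ≤ B a * ρ ^ kl.1 :=
      h a (Finset.mem_cons_self a t) kl.1
    have h2 : ‖coeff kl.2 (∏ k ∈ t, φ k)‖ ≤ (∏ k ∈ t, B k) * ρ ^ kl.2 :=
      ih (fun k hk => hB k (Finset.mem_cons_of_mem hk))
        (fun k hk => h k (Finset.mem_cons_of_mem hk)) kl.2
    calc ‖coeff kl.1 (φ a) * coeff kl.2 (∏ k ∈ t, φ k)‖
        = ‖coeff kl.1 (φ a)‖ * ‖coeff kl.2 (∏ k ∈ t, φ k)‖ := norm_mul _ _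
      _ ≤ (B a * ρ ^ kl.1) * ((∏ k ∈ t, B k) * ρ ^ kl.2) := by
          apply mul_le_mul h1 h2 (norm_nonneg _) (by positivity)
      _ = B a * (∏ k ∈ t, B k) * ρ ^ n := by rw [← hkln, pow_add]; ring

theorem coeff_pow_le {φ : PowerSeries F} {B : ℝ} (hB : 0 ≤ B) {ρ : ℝ} (hρ0 : 0 ≤ ρ) (hρ1 : ρ ≤ 1)
    (h : ∀ n, ‖coeff n φ‖ ≤ B * ρ ^ n) (s : ℕ) (n : ℕ) :
    ‖coeff n (φ ^ s)‖ ≤ B ^ s * ρ ^ n := by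
  have := coeff_prod_le (Finset.range s) (fun _ => φ) (fun _ => B)
    (fun k _ => hB) hρ0 hρ1 (fun k _ => h) n
  simpa using this

end Bounds

/-! ### Norm computations for `L_i` -/

section NormFacts

variable {F : Type*} [NormedField F] [IsUltrametricDist F]
variable {q : ℕ} {θ : F} (hq2 : 2 ≤ q) (hθ : ‖θ‖ = (q : ℝ))
include hq2 hθ

theorem hq1R : (1 : ℝ) < (q : ℝ) := by exact_mod_cast hq2.trans_lt' one_lt_two

theorem norm_a (m : ℕ) : ‖θ ^ q ^ (m + 1)‖ = (q : ℝ) ^ q ^ (m + 1) := by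
  rw [norm_pow, hθ]

theorem norm_lin (m : ℕ) : ‖θ - θ ^ q ^ (m + 1)‖ = (q : ℝ) ^ q ^ (m + 1) := by
  have h1 : (1:ℝ) < q := hq1R hq2 hθ
  have hlt : ‖θ‖ < ‖θ ^ q ^ (m + 1)‖ := by
    rw [hθ, norm_a hq2 hθ]
    calc (q:ℝ) = (q:ℝ) ^ 1 := (pow_one _).symm
      _ < (q:ℝ) ^ q ^ (m+1) := by
          apply pow_lt_pow_right₀ h1
          exact Nat.one_lt_pow (Nat.succ_ne_zero m) hq2
  rw [sub_eq_add_neg]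
  rw [IsUltrametricDist.norm_add_eq_max_of_norm_ne_norm (by rw [norm_neg]; exact hlt.ne)]
  rw [norm_neg, norm_a hq2 hθ]
  exact max_eq_right (by rw [← norm_a hq2 hθ, ← hθ] at *; exact hlt.le)

theorem norm_LF_succ (j : ℕ) :
    ‖LF q θ (j + 1)‖ = ‖LF q θ j‖ * (q : ℝ) ^ q ^ (j + 1) := by
  rw [LF, LF, Finset.prod_range_succ, norm_mul, norm_lin hq2 hθ]

end NormFacts

/-- `A = q^(q/(q-1))`. -/
def Aq (q : ℕ) : ℝ := (q : ℝ) ^ ((q : ℝ) / ((q : ℝ) - 1))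

theorem Aq_pos {q : ℕ} (hq2 : 2 ≤ q) : 0 < Aq q :=
  Real.rpow_pos_of_pos (by exact_mod_cast lt_of_lt_of_le (by norm_num : 0 < 2) hq2) _

theorem Aq_pow (q : ℕ) (n : ℕ) : (Aq q) ^ n = (q : ℝ) ^ ((q : ℝ) / ((q : ℝ) - 1) * n) := by
  rw [Aq, ← Real.rpow_natCast ((q:ℝ) ^ ((q : ℝ) / ((q : ℝ) - 1))) n, ← Real.rpow_mul (by positivity)]

theorem Aq_rpow_eq (q : ℕ) (s : ℕ) :
    (q : ℝ) ^ ((s : ℝ) * (q : ℝ) / ((q : ℝ) - 1)) = (Aq q) ^ s := by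
  rw [Aq_pow]
  congr 1
  ring

theorem Aq_pred {q : ℕ} (hq2 : 2 ≤ q) : (Aq q) ^ (q - 1) = (q : ℝ) ^ q := by
  have h1 : (1:ℝ) < q := by exact_mod_cast hq2.trans_lt' one_lt_two
  have hne : (q : ℝ) - 1 ≠ 0 := by linarith
  rw [Aq_pow]
  have hc : ((q - 1 : ℕ) : ℝ) = (q : ℝ) - 1 := by
    have h : 1 ≤ q := le_trans one_le_two hq2
    push_cast [Nat.cast_sub h]
    ring
  rw [hc]
  have he : (q : ℝ) / ((q : ℝ) - 1) * ((q : ℝ) - 1) = (q : ℝ) := by field_simp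
  rw [he, Real.rpow_natCast]

section NormFacts2

variable {F : Type*} [NormedField F] [IsUltrametricDist F]
variable {q : ℕ} {θ : F} (hq2 : 2 ≤ q) (hθ : ‖θ‖ = (q : ℝ))
include hq2 hθ

theorem Aq_qpow (j : ℕ) : (Aq q) ^ q ^ j = ‖LF q θ j‖ * Aq q := by
  induction j with
  | zero => simp [LF]
  | succ j ih =>
    have hq1 : 1 ≤ q := le_trans one_le_two hq2
    have h1 : ((Aq q) ^ q ^ j) ^ (q - 1) = (q : ℝ) ^ q ^ (j + 1) := by
      rw [← pow_mul, mul_comm (q ^ j) (q-1), pow_mul, Aq_pred hq2, ← pow_mul]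
      congr 1
      rw [pow_succ, mul_comm]
    calc (Aq q) ^ q ^ (j + 1) = ((Aq q) ^ q ^ j) ^ q := by
          rw [← pow_mul, pow_succ]
      _ = ((Aq q) ^ q ^ j) ^ (q - 1) * (Aq q) ^ q ^ j := by
          rw [← pow_succ]
          congr 1
          omega
      _ = (q : ℝ) ^ q ^ (j + 1) * (‖LF q θ j‖ * Aq q) := by rw [h1, ih]
      _ = ‖LF q θ (j + 1)‖ * Aq q := by rw [norm_LF_succ hq2 hθ]; ring

theorem norm_LF_pos (j : ℕ) : 0 < ‖LF q θ j‖ := by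
  have h := Aq_qpow hq2 hθ (q := q) (θ := θ) j
  have hA : 0 < Aq q := Aq_pos hq2
  nlinarith [pow_pos hA (q ^ j)]

theorem LF_ne_zero (j : ℕ) : LF q θ j ≠ 0 :=
  norm_pos_iff.mp (norm_LF_pos hq2 hθ j)

theorem theta_ne_zero : θ ≠ 0 := by
  have h : 0 < ‖θ‖ := by
    rw [hθ]
    exact_mod_cast lt_of_lt_of_le (by norm_num : 0 < 2) hq2
  exact norm_pos_iff.mp h

end NormFacts2

/-! ### Specialization at `t = θ` -/

section Spec
variable {F : Type*} [NormedField F] [IsUltrametricDist F] [CompleteSpace F]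

/-- coefficients are norm-summable at `θ` and the evaluation sums to `v`. -/
def Espec (θ : F) (φ : PowerSeries F) (v : F) : Prop :=
  Summable (fun n => ‖coeff n φ‖ * ‖θ‖ ^ n) ∧ HasSum (fun n => coeff n φ * θ ^ n) v

theorem Espec.summable {θ : F} {φ : PowerSeries F}
    (h : Summable (fun n => ‖coeff n φ‖ * ‖θ‖ ^ n)) :
    Summable (fun n => coeff n φ * θ ^ n) :=
  Summable.of_norm (by simpa [norm_mul, norm_pow] using h)

theorem Espec.mul {θ : F} {φ ψ : PowerSeries F} {v w : F}
    (hφ : Espec θ φ v) (hψ : Espec θ ψ w) : Espec θ (φ * ψ) (v * w) := by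
  obtain ⟨hφ1, hφ2⟩ := hφ
  obtain ⟨hψ1, hψ2⟩ := hψ
  have hnf : Summable fun n => ‖coeff n φ * θ ^ n‖ := by
    simpa [norm_mul, norm_pow] using hφ1
  have hng : Summable fun n => ‖coeff n ψ * θ ^ n‖ := by
    simpa [norm_mul, norm_pow] using hψ1
  have key : ∀ n : ℕ, coeff n (φ * ψ) * θ ^ n
      = ∑ kl ∈ Finset.HasAntidiagonal.antidiagonal n, (coeff kl.1 φ * θ ^ kl.1) * (coeff kl.2 ψ * θ ^ kl.2) := by
    intro n
    rw [PowerSeries.coeff_mul, Finset.sum_mul]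
    refine Finset.sum_congr rfl fun kl hkl => ?_
    rw [← Finset.HasAntidiagonal.mem_antidiagonal.mp hkl, pow_add]; ring
  have hsum : Summable fun n => ‖coeff n (φ * ψ) * θ ^ n‖ := by
    have := summable_norm_sum_mul_antidiagonal_of_summable_norm hnf hng
    simpa [← key] using this
  constructor
  · simpa [norm_mul, norm_pow] using hsum
  · have ht := tsum_mul_tsum_eq_tsum_sum_antidiagonal_of_summable_norm hnf hng
    have hv : (∑' n, coeff n φ * θ ^ n) = v := hφ2.tsum_eq
    have hw : (∑' n, coeff n ψ * θ ^ n) = w := hψ2.tsum_eq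
    have := hsum.of_norm.hasSum
    rw [show (∑' n, coeff n (φ * ψ) * θ ^ n) = v * w by
      rw [← hv, ← hw, ht]; exact tsum_congr key] at this
    exact this

theorem Espec.one (θ : F) : Espec θ 1 1 := by
  constructor
  · apply summable_of_ne_finset_zero (s := {0})
    intro n hn
    simp only [Finset.mem_singleton] at hn
    simp [PowerSeries.coeff_one, hn]
  · have : ∀ n ∉ ({0} : Finset ℕ), coeff n 1 * θ ^ n = 0 := by
      intro n hn
      simp only [Finset.mem_singleton] at hn
      simp [PowerSeries.coeff_one, hn]
    simpa using hasSum_sum_of_ne_finset_zero this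

theorem Espec.Cconst (θ a : F) : Espec θ (PowerSeries.C a) a := by
  constructor
  · apply summable_of_ne_finset_zero (s := {0})
    intro n hn
    simp only [Finset.mem_singleton] at hn
    simp [PowerSeries.coeff_C, hn]
  · have h : ∀ n ∉ ({0} : Finset ℕ), coeff n (C a) * θ ^ n = 0 := by
      intro n hn
      simp only [Finset.mem_singleton] at hn
      simp [PowerSeries.coeff_C, hn]
    simpa using hasSum_sum_of_ne_finset_zero h

theorem Espec.linear (θ a : F) : Espec θ (X - C a) (θ - a) := by
  have hc0 : ∀ n ∉ ({0, 1} : Finset ℕ), coeff n (X - C a) = 0 := by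
    intro n hn
    simp only [Finset.mem_insert, Finset.mem_singleton, not_or] at hn
    rw [map_sub]
    rcases n with _ | n
    · simp at hn
    rcases n with _ | n
    · simp at hn
    simp [PowerSeries.coeff_C, PowerSeries.coeff_X]
  have hc : ∀ n ∉ ({0, 1} : Finset ℕ), coeff n (X - C a) * θ ^ n = 0 := by
    intro n hn; rw [hc0 n hn, zero_mul]
  constructor
  · apply summable_of_ne_finset_zero (s := {0, 1})
    intro n hn
    rw [hc0 n hn]
    simp
  · have := (hasSum_sum_of_ne_finset_zero hc : HasSum (fun n => coeff n (X - C a) * θ ^ n) _)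
    have he : (∑ n ∈ ({0, 1} : Finset ℕ), coeff n (X - C a) * θ ^ n) = θ - a := by
      rw [Finset.sum_insert (by simp), Finset.sum_singleton]
      simp [map_sub, PowerSeries.coeff_C, PowerSeries.coeff_X]
      ring
    rwa [he] at this

theorem Espec.prod {θ : F} {ι : Type*} (t : Finset ι) (φ : ι → PowerSeries F) (v : ι → F)
    (h : ∀ k ∈ t, Espec θ (φ k) (v k)) : Espec θ (∏ k ∈ t, φ k) (∏ k ∈ t, v k) := by
  induction t using Finset.cons_induction with
  | empty => simpa using Espec.one θ
  | cons a t ha ih =>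
    rw [Finset.prod_cons, Finset.prod_cons]
    exact (h a (Finset.mem_cons_self a t)).mul (ih fun k hk => h k (Finset.mem_cons_of_mem hk))

theorem Espec.inv {θ : F} {φ : PowerSeries F} {v : F} (hφ : Espec θ φ v) (hv : v ≠ 0)
    (hc : constantCoeff φ ≠ 0)
    (hsum : Summable fun n => ‖coeff n φ⁻¹‖ * ‖θ‖ ^ n) : Espec θ φ⁻¹ v⁻¹ := by
  set w := ∑' n, coeff n φ⁻¹ * θ ^ n with hw_def
  have hw : HasSum (fun n => coeff n φ⁻¹ * θ ^ n) w := (Espec.summable hsum).hasSum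
  have hinv : Espec θ φ⁻¹ w := ⟨hsum, hw⟩
  have hmul := hφ.mul hinv
  rw [PowerSeries.mul_inv_cancel _ hc] at hmul
  have h1 : v * w = 1 := hmul.2.unique (Espec.one θ).2
  have h2 : v⁻¹ = w := inv_eq_of_mul_eq_one_right h1
  rwa [h2]

end Spec

/-! ### Bounds and specialization for `(LL^s)⁻¹` and `polyLogTerm` -/

section LLBounds
variable {F : Type*} [NormedField F] [IsUltrametricDist F]
variable {q : ℕ} {θ : F} (hq2 : 2 ≤ q) (hθ : ‖θ‖ = (q : ℝ))
include hq2 hθ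

theorem rho_nonneg : (0:ℝ) ≤ (((q:ℝ) ^ q)⁻¹) := by positivity

theorem rho_le_one : (((q:ℝ) ^ q)⁻¹) ≤ 1 := by
  have h1 : (1:ℝ) ≤ (q:ℝ) := (hq1R hq2 hθ).le
  have : (1:ℝ) ≤ (q:ℝ) ^ q := one_le_pow₀ h1
  exact inv_le_one_of_one_le₀ this

theorem norm_a_ge (m : ℕ) : (q:ℝ) ^ q ≤ ‖θ ^ q ^ (m + 1)‖ := by
  rw [norm_a hq2 hθ]
  exact pow_le_pow_right₀ (hq1R hq2 hθ).le (Nat.le_self_pow (Nat.succ_ne_zero m) q)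

theorem norm_coeff_inv_lin_le (m n : ℕ) :
    ‖coeff n (X - PowerSeries.C (θ ^ q ^ (m + 1)))⁻¹‖
      ≤ ‖θ ^ q ^ (m + 1)‖⁻¹ * (((q:ℝ) ^ q)⁻¹) ^ n := by
  have ha : θ ^ q ^ (m + 1) ≠ 0 := pow_ne_zero _ (theta_ne_zero hq2 hθ)
  have hapos : 0 < ‖θ ^ q ^ (m + 1)‖ := norm_pos_iff.mpr ha
  have hcpos : (0:ℝ) < (q:ℝ) ^ q := by positivity
  rw [inv_linear _ ha, coeff_mk, norm_neg, norm_pow, norm_inv]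
  rw [pow_succ, mul_comm]
  apply mul_le_mul_of_nonneg_left _ (by positivity)
  apply pow_le_pow_left₀ (by positivity)
  exact (inv_anti₀ hcpos (norm_a_ge hq2 hθ m))

theorem norm_LF_eq (i : ℕ) : ‖LF q θ i‖ = ∏ m ∈ Finset.range i, ‖θ ^ q ^ (m + 1)‖ := by
  rw [LF, norm_prod]
  exact Finset.prod_congr rfl fun m _ => by rw [norm_lin hq2 hθ, norm_a hq2 hθ]

theorem norm_coeff_inv_LL_pow_le (i s n : ℕ) :
    ‖coeff n ((LL q θ i ^ s)⁻¹)‖ ≤ ((‖LF q θ i‖ ^ s)⁻¹) * (((q:ℝ) ^ q)⁻¹) ^ n := by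
  rw [pow_inv, LL, prod_inv]
  have hbase : ∀ n, ‖coeff n (∏ m ∈ Finset.range i,
      (X - PowerSeries.C (θ ^ q ^ (m + 1)))⁻¹)‖
      ≤ (∏ m ∈ Finset.range i, ‖θ ^ q ^ (m + 1)‖⁻¹) * (((q:ℝ) ^ q)⁻¹) ^ n := by
    intro n
    apply coeff_prod_le _ _ _ (fun m _ => by positivity) (rho_nonneg hq2 hθ) (rho_le_one hq2 hθ)
      (fun m _ n => norm_coeff_inv_lin_le hq2 hθ m n) n
  have h := coeff_pow_le (Finset.prod_nonneg fun m _ => by positivity)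
    (rho_nonneg hq2 hθ) (rho_le_one hq2 hθ) hbase s n
  calc ‖coeff n ((∏ m ∈ Finset.range i, (X - PowerSeries.C (θ ^ q ^ (m + 1)))⁻¹) ^ s)‖
      ≤ (∏ m ∈ Finset.range i, ‖θ ^ q ^ (m + 1)‖⁻¹) ^ s * (((q:ℝ) ^ q)⁻¹) ^ n := h
    _ = ((‖LF q θ i‖ ^ s)⁻¹) * (((q:ℝ) ^ q)⁻¹) ^ n := by
        rw [norm_LF_eq hq2 hθ, Finset.prod_inv_distrib, inv_pow]

theorem sigma_lt_one : (q:ℝ) * (((q:ℝ) ^ q)⁻¹) < 1 := by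
  have h1 : (1:ℝ) < q := hq1R hq2 hθ
  have hq : (q:ℝ) < (q:ℝ) ^ q := by
    calc (q:ℝ) = (q:ℝ) ^ 1 := (pow_one _).symm
      _ < (q:ℝ) ^ q := pow_lt_pow_right₀ h1 (by omega)
  rw [mul_inv_lt_iff₀ (by positivity), one_mul]
  exact hq

theorem sigma_nonneg : (0:ℝ) ≤ (q:ℝ) * (((q:ℝ) ^ q)⁻¹) := by positivity

variable [CompleteSpace F]

theorem summable_geom_bound {φ : PowerSeries F} {B : ℝ}
    (h : ∀ n, ‖coeff n φ‖ ≤ B * (((q:ℝ) ^ q)⁻¹) ^ n) :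
    Summable fun n => ‖coeff n φ‖ * ‖θ‖ ^ n := by
  refine Summable.of_nonneg_of_le (fun n => by positivity) (fun n => ?_)
    (((summable_geometric_of_lt_one (sigma_nonneg hq2 hθ)
      (sigma_lt_one hq2 hθ)).mul_left B) :
      Summable fun n => B * ((q:ℝ) * (((q:ℝ) ^ q)⁻¹)) ^ n)
  rw [hθ, mul_pow]
  calc ‖coeff n φ‖ * (q:ℝ) ^ n ≤ (B * (((q:ℝ) ^ q)⁻¹) ^ n) * (q:ℝ) ^ n := by
        apply mul_le_mul_of_nonneg_right (h n) (by positivity)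
    _ = B * ((q:ℝ) ^ n * ((((q:ℝ) ^ q)⁻¹) ^ n)) := by ring

theorem Espec_LL_pow (i s : ℕ) : Espec θ (LL q θ i ^ s) (LF q θ i ^ s) := by
  have hLL : Espec θ (LL q θ i) (LF q θ i) := by
    rw [LL, LF]
    exact Espec.prod _ _ _ fun m _ => Espec.linear θ _
  have := Espec.prod (Finset.range s) (fun _ => LL q θ i) (fun _ => LF q θ i)
    (fun m _ => hLL)
  simpa using this

theorem constCoeff_LL_pow_ne (i s : ℕ) : constantCoeff (LL q θ i ^ s) ≠ 0 := by
  rw [map_pow]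
  apply pow_ne_zero
  rw [LL, map_prod]
  apply Finset.prod_ne_zero_iff.mpr
  intro m _
  rw [map_sub]
  simp only [constantCoeff_X, PowerSeries.constantCoeff_C, zero_sub, neg_ne_zero]
  exact pow_ne_zero _ (theta_ne_zero hq2 hθ)

theorem Espec_inv_LL_pow (i s : ℕ) :
    Espec θ ((LL q θ i ^ s)⁻¹) ((LF q θ i ^ s)⁻¹) := by
  apply Espec.inv (Espec_LL_pow hq2 hθ i s)
    (pow_ne_zero _ (LF_ne_zero hq2 hθ i)) (constCoeff_LL_pow_ne hq2 hθ i s)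
  exact summable_geom_bound hq2 hθ (fun n => norm_coeff_inv_LL_pow_le hq2 hθ i s n)

theorem Espec_term {r : ℕ} (s : Fin r → ℕ) (u : Fin r → F) (i : Fin r → ℕ) :
    Espec θ (polyLogTerm q θ s u i) (∏ k, u k ^ q ^ i k / LF q θ (i k) ^ s k) := by
  rw [polyLogTerm]
  apply Espec.prod
  intro k _
  rw [div_eq_mul_inv]
  exact (Espec.Cconst θ _).mul (Espec_inv_LL_pow hq2 hθ (i k) (s k))

theorem norm_coeff_term_le {r : ℕ} (s : Fin r → ℕ) (u : Fin r → F) (i : Fin r → ℕ) (n : ℕ) :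
    ‖coeff n (polyLogTerm q θ s u i)‖
      ≤ (∏ k, ‖u k‖ ^ q ^ i k * ((‖LF q θ (i k)‖ ^ s k)⁻¹)) * (((q:ℝ) ^ q)⁻¹) ^ n := by
  rw [polyLogTerm]
  apply coeff_prod_le _ _ _ (fun k _ => by positivity) (rho_nonneg hq2 hθ) (rho_le_one hq2 hθ)
  intro k _ n
  rw [PowerSeries.coeff_C_mul, norm_mul, norm_pow]
  calc ‖u k‖ ^ q ^ i k * ‖coeff n ((LL q θ (i k) ^ s k)⁻¹)‖
      ≤ ‖u k‖ ^ q ^ i k * (((‖LF q θ (i k)‖ ^ s k)⁻¹) * (((q:ℝ) ^ q)⁻¹) ^ n) := by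
        apply mul_le_mul_of_nonneg_left (norm_coeff_inv_LL_pow_le hq2 hθ _ _ _) (by positivity)
    _ = ‖u k‖ ^ q ^ i k * ((‖LF q θ (i k)‖ ^ s k)⁻¹) * (((q:ℝ) ^ q)⁻¹) ^ n := by ring

end LLBounds

end St15

open St15

/-- specialization identity `𝔏i⋆_{𝔰,u}|_{t=θ} = Li⋆_𝔰(u)` of
Section 3.1 of the paper.  Writing `𝔏i⋆_{𝔰,u} = Σ_m c_m t^m`, we have `|c_m| q^m → 0`,
the family `(c_m θ^m)` is summable in `F`, and its sum is `Li⋆_𝔰(u)`. -/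
theorem statement15
    {F : Type*} [NormedField F] [IsUltrametricDist F] [CompleteSpace F]
    (q : ℕ) (hq : IsPrimePow q) (θ : F) (hθ : ‖θ‖ = (q : ℝ))
    {r : ℕ} (hr : 0 < r) (s : Fin r → ℕ) (hs : ∀ k, 0 < s k)
    (u : Fin r → F)
    (h1 : ‖u ⟨0, hr⟩‖ < (q : ℝ) ^ ((s ⟨0, hr⟩ : ℝ) * (q : ℝ) / ((q : ℝ) - 1)))
    (hk : ∀ k : Fin r, k ≠ ⟨0, hr⟩ →
      ‖u k‖ ≤ (q : ℝ) ^ ((s k : ℝ) * (q : ℝ) / ((q : ℝ) - 1))) :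
    Summable (fun i : {i : Fin r → ℕ // Antitone i} => polyLogTerm q θ s u i.1)
    ∧ Summable (fun i : {i : Fin r → ℕ // Antitone i} =>
        ∏ k, u k ^ q ^ i.1 k / LF q θ (i.1 k) ^ s k)
    ∧ Tendsto (fun m : ℕ =>
        ‖PowerSeries.coeff m
            (∑' i : {i : Fin r → ℕ // Antitone i}, polyLogTerm q θ s u i.1)‖ * (q : ℝ) ^ m)
        atTop (nhds 0)
    ∧ HasSum (fun m : ℕ =>
        PowerSeries.coeff m
            (∑' i : {i : Fin r → ℕ // Antitone i}, polyLogTerm q θ s u i.1) * θ ^ m)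
        (∑' i : {i : Fin r → ℕ // Antitone i},
          ∏ k, u k ^ q ^ i.1 k / LF q θ (i.1 k) ^ s k) := by
  classical
  have hq2 : 2 ≤ q := hq.two_le
  have hq1 : (1:ℝ) < q := hq1R hq2 hθ
  set z : Fin r := ⟨0, hr⟩ with hz
  set A : ℝ := Aq q with hA
  have hA0 : 0 < A := Aq_pos hq2
  have hAq : ∀ j : ℕ, A ^ q ^ j = ‖LF q θ j‖ * A := fun j => Aq_qpow hq2 hθ j
  -- translated hypotheses
  have hu1 : ‖u z‖ < A ^ s z := by rw [Aq_rpow_eq] at h1; exact h1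
  have huk : ∀ k, ‖u k‖ ≤ A ^ s k := by
    intro k
    by_cases hkz : k = z
    · subst hkz; exact hu1.le
    · simp only [Aq_rpow_eq] at hk; exact hk k hkz
  set δ : ℝ := ‖u z‖ / A ^ s z with hδ
  have hδ0 : 0 ≤ δ := by positivity
  have hδ1 : δ < 1 := (div_lt_one (by positivity)).mpr hu1
  set C : ℝ := ∏ k : Fin r, A ^ s k with hC
  have hC0 : 0 < C := Finset.prod_pos fun k _ => by positivity
  set ρ : ℝ := ((q:ℝ) ^ q)⁻¹ with hρ
  have hρ0 : 0 ≤ ρ := rho_nonneg hq2 hθ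
  have hρ1 : ρ ≤ 1 := rho_le_one hq2 hθ
  set σ : ℝ := (q:ℝ) * ρ with hσ
  have hσ0 : 0 ≤ σ := sigma_nonneg hq2 hθ
  have hσ1 : σ < 1 := sigma_lt_one hq2 hθ
  set Bnd : (Fin r → ℕ) → ℝ :=
    fun i => ∏ k, ‖u k‖ ^ q ^ i k * ((‖LF q θ (i k)‖ ^ s k)⁻¹) with hBnd
  have hBnd0 : ∀ i, 0 ≤ Bnd i := fun i => Finset.prod_nonneg fun k _ => by positivity
  -- per-factor bounds
  have hLpos : ∀ j, 0 < ‖LF q θ j‖ := norm_LF_pos hq2 hθ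
  have factor_le : ∀ (k : Fin r) (j : ℕ),
      ‖u k‖ ^ q ^ j * ((‖LF q θ j‖ ^ s k)⁻¹) ≤ A ^ s k := by
    intro k j
    rw [mul_inv_le_iff₀ (pow_pos (hLpos j) _)]
    calc ‖u k‖ ^ q ^ j ≤ (A ^ s k) ^ q ^ j := pow_le_pow_left₀ (norm_nonneg _) (huk k) _
      _ = (A ^ q ^ j) ^ s k := pow_right_comm _ _ _
      _ = (‖LF q θ j‖ * A) ^ s k := by rw [hAq]
      _ = A ^ s k * ‖LF q θ j‖ ^ s k := by rw [mul_pow]; ring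
  have factor0_le : ∀ j : ℕ,
      ‖u z‖ ^ q ^ j * ((‖LF q θ j‖ ^ s z)⁻¹) ≤ δ ^ q ^ j * A ^ s z := by
    intro j
    rw [mul_inv_le_iff₀ (pow_pos (hLpos j) _)]
    have hu0 : ‖u z‖ = δ * A ^ s z := by
      rw [hδ, div_mul_cancel₀ _ (by positivity : (A:ℝ) ^ s z ≠ 0)]
    refine le_of_eq ?_
    calc ‖u z‖ ^ q ^ j = δ ^ q ^ j * (A ^ s z) ^ q ^ j := by rw [hu0, mul_pow]
      _ = δ ^ q ^ j * ((‖LF q θ j‖ * A) ^ s z) := by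
          rw [pow_right_comm A, hAq]
      _ = δ ^ q ^ j * A ^ s z * ‖LF q θ j‖ ^ s z := by rw [mul_pow]; ring
  have Bnd_le : ∀ i : Fin r → ℕ, Bnd i ≤ C * δ ^ q ^ (i z) := by
    intro i
    have step1 : Bnd i ≤ ∏ k, (if k = z then δ ^ q ^ (i z) * A ^ s z else A ^ s k) := by
      apply Finset.prod_le_prod (fun k _ => by positivity)
      intro k _
      by_cases hkz : k = z
      · subst hkz; rw [if_pos rfl]; exact factor0_le (i z)
      · rw [if_neg hkz]; exact factor_le k (i k)
    have step2 : (∏ k, (if k = z then δ ^ q ^ (i z) * A ^ s z else A ^ s k))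
        = δ ^ q ^ (i z) * C := by
      rw [← Finset.mul_prod_erase Finset.univ _ (Finset.mem_univ z), if_pos rfl]
      rw [hC, ← Finset.mul_prod_erase Finset.univ (fun k => A ^ s k) (Finset.mem_univ z)]
      rw [Finset.prod_congr rfl (fun k hk => if_neg (Finset.ne_of_mem_erase hk))]
      ring
    calc Bnd i ≤ δ ^ q ^ (i z) * C := step1.trans_eq step2
      _ = C * δ ^ q ^ (i z) := mul_comm _ _
  have Bnd_le_C : ∀ i : Fin r → ℕ, Bnd i ≤ C := by
    intro i
    calc Bnd i ≤ C * δ ^ q ^ (i z) := Bnd_le i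
      _ ≤ C * 1 := mul_le_mul_of_nonneg_left (pow_le_one₀ hδ0 hδ1.le) hC0.le
      _ = C := mul_one C
  have coeffT_le : ∀ (i : Fin r → ℕ) (n : ℕ),
      ‖coeff n (polyLogTerm q θ s u i)‖ ≤ Bnd i * ρ ^ n :=
    fun i n => norm_coeff_term_le hq2 hθ s u i n
  -- decay of the bound
  have hdecay : Tendsto (fun N : ℕ => C * δ ^ q ^ N) atTop (𝓝 0) := by
    have hbd : ∀ N : ℕ, C * δ ^ q ^ N ≤ C * δ ^ N := by
      intro N
      apply mul_le_mul_of_nonneg_left _ hC0.le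
      exact pow_le_pow_of_le_one hδ0 hδ1.le (Nat.lt_pow_self (n := N) (a := q) (by omega)).le
    have h2 : Tendsto (fun N : ℕ => C * δ ^ N) atTop (𝓝 0) := by
      have := (tendsto_pow_atTop_nhds_zero_of_lt_one hδ0 hδ1).const_mul C
      simpa using this
    exact squeeze_zero (fun N => by positivity) hbd h2
  -- finiteness of sublevel sets
  have hzk : ∀ k : Fin r, z ≤ k := fun k => by simp [hz, Fin.le_def]
  have hfin : ∀ N : ℕ, {i : {i : Fin r → ℕ // Antitone i} | i.1 z ≤ N}.Finite := by
    intro N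
    have hsub : {i : {i : Fin r → ℕ // Antitone i} | i.1 z ≤ N}
        ⊆ (fun i : {i : Fin r → ℕ // Antitone i} => i.1) ⁻¹'
          (Set.Icc (fun _ => 0) (fun _ => N)) := by
      intro i hi
      simp only [Set.mem_preimage, Set.mem_Icc] at *
      constructor
      · intro k; exact Nat.zero_le _
      · intro k; exact le_trans (i.2 (hzk k)) hi
    exact ((Set.finite_Icc _ _).preimage (Subtype.val_injective.injOn)).subset hsub
  have hproj : Tendsto (fun i : {i : Fin r → ℕ // Antitone i} => i.1 z) cofinite atTop := by
    rw [tendsto_atTop]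
    intro N
    rw [eventually_cofinite]
    apply (hfin N).subset
    intro i hi
    simp only [Set.mem_setOf_eq, not_le] at hi ⊢
    omega
  have hBtend : Tendsto (fun i : {i : Fin r → ℕ // Antitone i} => C * δ ^ q ^ (i.1 z))
      cofinite (𝓝 0) := hdecay.comp hproj
  -- part 1 : summability of the power-series family
  have hsumcoeff : ∀ n, Summable fun i : {i : Fin r → ℕ // Antitone i} =>
      coeff n (polyLogTerm q θ s u i.1) := by
    intro n
    apply NonarchimedeanAddGroup.summable_of_tendsto_cofinite_zero
    apply squeeze_zero_norm (a := fun i : {i : Fin r → ℕ // Antitone i} =>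
      (C * δ ^ q ^ (i.1 z)) * ρ ^ n)
    · intro i
      exact (coeffT_le i.1 n).trans
        (mul_le_mul_of_nonneg_right (Bnd_le i.1) (by positivity))
    · have := hBtend.mul_const (ρ ^ n)
      simpa using this
  have hpart1 : HasSum (fun i : {i : Fin r → ℕ // Antitone i} => polyLogTerm q θ s u i.1)
      (PowerSeries.mk fun n => ∑' i : {i : Fin r → ℕ // Antitone i},
        coeff n (polyLogTerm q θ s u i.1)) := hasSum_mk hsumcoeff
  have hcoefftsum : ∀ n, coeff n (∑' i : {i : Fin r → ℕ // Antitone i},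
      polyLogTerm q θ s u i.1) = ∑' i : {i : Fin r → ℕ // Antitone i},
      coeff n (polyLogTerm q θ s u i.1) := coeff_tsum hsumcoeff
  -- part 3 : decay of coefficients
  have hnormbound : ∀ n, ‖coeff n (∑' i : {i : Fin r → ℕ // Antitone i},
      polyLogTerm q θ s u i.1)‖ ≤ C * ρ ^ n := by
    intro n
    rw [hcoefftsum n]
    apply IsUltrametricDist.norm_tsum_le_of_forall_le_of_nonneg (by positivity)
    intro i
    exact (coeffT_le i.1 n).trans (mul_le_mul_of_nonneg_right (Bnd_le_C i.1) (by positivity))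
  have hpart3 : Tendsto (fun m : ℕ =>
      ‖coeff m (∑' i : {i : Fin r → ℕ // Antitone i}, polyLogTerm q θ s u i.1)‖ * (q:ℝ) ^ m)
      atTop (𝓝 0) := by
    have hbd : ∀ m : ℕ,
        ‖coeff m (∑' i : {i : Fin r → ℕ // Antitone i}, polyLogTerm q θ s u i.1)‖ * (q:ℝ) ^ m
        ≤ C * σ ^ m := by
      intro m
      calc ‖coeff m (∑' i : {i : Fin r → ℕ // Antitone i}, polyLogTerm q θ s u i.1)‖ * (q:ℝ) ^ m
          ≤ (C * ρ ^ m) * (q:ℝ) ^ m :=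
            mul_le_mul_of_nonneg_right (hnormbound m) (by positivity)
        _ = C * σ ^ m := by rw [hσ, mul_pow]; ring
    have h2 : Tendsto (fun m : ℕ => C * σ ^ m) atTop (𝓝 0) := by
      have := (tendsto_pow_atTop_nhds_zero_of_lt_one hσ0 hσ1).const_mul C
      simpa using this
    exact squeeze_zero (fun m => by positivity) hbd h2
  -- parts 2 and 4 : the double family
  set g : {i : Fin r → ℕ // Antitone i} × ℕ → F :=
    fun p => coeff p.2 (polyLogTerm q θ s u p.1.1) * θ ^ p.2 with hg
  have hg_bound : ∀ p : {i : Fin r → ℕ // Antitone i} × ℕ,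
      ‖g p‖ ≤ (C * δ ^ q ^ (p.1.1 z)) * σ ^ p.2 := by
    intro p
    rw [hg]
    simp only [norm_mul, norm_pow, hθ]
    calc ‖coeff p.2 (polyLogTerm q θ s u p.1.1)‖ * (q:ℝ) ^ p.2
        ≤ (Bnd p.1.1 * ρ ^ p.2) * (q:ℝ) ^ p.2 :=
          mul_le_mul_of_nonneg_right (coeffT_le p.1.1 p.2) (by positivity)
      _ = Bnd p.1.1 * σ ^ p.2 := by rw [hσ, mul_pow]; ring
      _ ≤ (C * δ ^ q ^ (p.1.1 z)) * σ ^ p.2 :=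
          mul_le_mul_of_nonneg_right (Bnd_le p.1.1) (by positivity)
  have hgsum : Summable g := by
    apply NonarchimedeanAddGroup.summable_of_tendsto_cofinite_zero
    rw [NormedAddCommGroup.tendsto_nhds_zero]
    intro ε hε
    rw [eventually_cofinite]
    have hS : {i : {i : Fin r → ℕ // Antitone i} | ε ≤ C * δ ^ q ^ (i.1 z)}.Finite := by
      have := eventually_cofinite.mp (hBtend.eventually (gt_mem_nhds hε))
      apply this.subset
      intro i hi
      simp only [Set.mem_setOf_eq] at hi ⊢
      exact not_lt.mpr hi
    have hT : {n : ℕ | ε ≤ C * σ ^ n}.Finite := by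
      have h2 : Tendsto (fun n : ℕ => C * σ ^ n) cofinite (𝓝 0) := by
        rw [Nat.cofinite_eq_atTop]
        have := (tendsto_pow_atTop_nhds_zero_of_lt_one hσ0 hσ1).const_mul C
        simpa using this
      have := eventually_cofinite.mp (h2.eventually (gt_mem_nhds hε))
      apply this.subset
      intro n hn
      simp only [Set.mem_setOf_eq] at hn ⊢
      exact not_lt.mpr hn
    apply (hS.prod hT).subset
    intro p hp
    simp only [Set.mem_setOf_eq, not_lt] at hp
    have hbp := (hp.trans (hg_bound p))
    constructor
    · calc ε ≤ (C * δ ^ q ^ (p.1.1 z)) * σ ^ p.2 := hbp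
        _ ≤ (C * δ ^ q ^ (p.1.1 z)) * 1 :=
            mul_le_mul_of_nonneg_left (pow_le_one₀ hσ0 hσ1.le) (by positivity)
        _ = C * δ ^ q ^ (p.1.1 z) := mul_one _
    · calc ε ≤ (C * δ ^ q ^ (p.1.1 z)) * σ ^ p.2 := hbp
        _ ≤ (C * 1) * σ ^ p.2 := by
            apply mul_le_mul_of_nonneg_right _ (by positivity)
            exact mul_le_mul_of_nonneg_left (pow_le_one₀ hδ0 hδ1.le) hC0.le
        _ = C * σ ^ p.2 := by rw [mul_one]
  have hfiber_i : ∀ i : {i : Fin r → ℕ // Antitone i},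
      HasSum (fun n => g (i, n)) (∏ k, u k ^ q ^ i.1 k / LF q θ (i.1 k) ^ s k) :=
    fun i => (Espec_term hq2 hθ s u i.1).2
  have htotal : HasSum g (∑' p, g p) := hgsum.hasSum
  have hpart2 : HasSum (fun i : {i : Fin r → ℕ // Antitone i} =>
      ∏ k, u k ^ q ^ i.1 k / LF q θ (i.1 k) ^ s k) (∑' p, g p) :=
    htotal.prod_fiberwise hfiber_i
  have hfiber_n : ∀ n : ℕ, HasSum (fun i : {i : Fin r → ℕ // Antitone i} => g (i, n))
      (coeff n (∑' i : {i : Fin r → ℕ // Antitone i}, polyLogTerm q θ s u i.1) * θ ^ n) := by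
    intro n
    rw [hcoefftsum n]
    exact (hsumcoeff n).hasSum.mul_right _
  have hswap : HasSum (fun p : ℕ × {i : Fin r → ℕ // Antitone i} => g (p.2, p.1)) (∑' p, g p) := by
    have := (Equiv.prodComm ℕ {i : Fin r → ℕ // Antitone i}).hasSum_iff
      (f := g) (a := ∑' p, g p)
    exact this.mpr htotal
  have hpart4 : HasSum (fun n : ℕ =>
      coeff n (∑' i : {i : Fin r → ℕ // Antitone i}, polyLogTerm q θ s u i.1) * θ ^ n)
      (∑' p, g p) := hswap.prod_fiberwise hfiber_n
  refine ⟨hpart1.summable, hpart2.summable, hpart3, ?_⟩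
  rwa [← hpart2.tsum_eq] at hpart4
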